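/- arXiv:2409.15614 — 3 statements merged into one kernel-verified Lean document; each statement's English description precedes it below -/
import Mathlib

section
/- (Lemma 2.9.) Define the curvature of ∇^L by R^L(V,W)Z := ∇^L_V∇^L_W Z − ∇^L_W∇^L_V Z − ∇^L_{[V,W]}Z. Then at every point of the BCV space N: R^L(X₁,X₂)X₁ = (3τ²L − λ)X₂, R^L(X₁,X₂)X₂ = (λ − 3τ²L)X₁, R^L(X₁,X₂)X₃ = 0, R^L(X₁,X₃)X₁ = −τ²L·X₃, R^L(X₁,X₃)X₂ = 0, R^L(X₁,X₃)X₃ = τ²L²·X₁, R^L(X₂,X₃)X₁ = 0, R^L(X₂,X₃)X₂ = −τ²L·X₃, and R^L(X₂,X₃)X₃ = τ²L²·X₂. -/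
/- Common setup for the BCV spaces (twisted BCV paper formalization). -/

noncomputable section

open scoped BigOperators

/-- A point of `ℝ³`. -/
abbrev Pt : Type := Fin 3 → ℝ

/-- A vector field on (an open subset of) `ℝ³`, viewed as a map `ℝ³ → ℝ³`. -/
abbrev VF : Type := Pt → Pt

/-- `μ(x) = 1 + (λ/4)(x₁² + x₂²)`. -/
def mu (lam : ℝ) (x : Pt) : ℝ := 1 + lam / 4 * ((x 0) ^ 2 + (x 1) ^ 2)

/-- The frame field `X₁`. -/
def X1 (lam tau : ℝ) : VF := fun x => ![mu lam x, 0, -tau * x 1]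

/-- The frame field `X₂`. -/
def X2 (lam tau : ℝ) : VF := fun x => ![0, mu lam x, tau * x 0]

/-- The frame field `X₃`. -/
def X3 : VF := fun _ => ![0, 0, 1]

/-- The frame as a family indexed by `Fin 3`. -/
def Xf (lam tau : ℝ) : Fin 3 → VF := ![X1 lam tau, X2 lam tau, X3]

/-- Lie bracket of vector fields: `[V,W](x) = DW(x)(V(x)) − DV(x)(W(x))`. -/
def bracket (V W : VF) (x : Pt) : Pt := fderiv ℝ W x (V x) - fderiv ℝ V x (W x)

/-- The coframe `ω₁, ω₂, ω₃` evaluated at `x` on the tangent vector `v`. -/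
def omf (lam tau : ℝ) (i : Fin 3) (x v : Pt) : ℝ :=
  ![v 0 / mu lam x, v 1 / mu lam x,
    v 2 + tau * (x 1 * v 0 - x 0 * v 1) / mu lam x] i

/-- The metric `g_L(x)(v,w) = ω₁(v)ω₁(w) + ω₂(v)ω₂(w) + L·ω₃(v)ω₃(w)`. -/
def gL (lam tau L : ℝ) (x v w : Pt) : ℝ :=
  omf lam tau 0 x v * omf lam tau 0 x w + omf lam tau 1 x v * omf lam tau 1 x w
    + L * (omf lam tau 2 x v * omf lam tau 2 x w)

/-- The directional derivative `X(f)(x) = Df(x)(X(x))` of `f` along the vector field `X`. -/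
def dd (X : VF) (f : Pt → ℝ) (x : Pt) : ℝ := fderiv ℝ f x (X x)

/-- The connection table `(∇^L_{Xᵢ}Xⱼ)(x)` on the frame. -/
def nablaF (lam tau L : ℝ) (i j : Fin 3) (x : Pt) : Pt :=
  ![![(lam / 2 * x 1) • X2 lam tau x,
      (-(lam / 2) * x 1) • X1 lam tau x + tau • X3 x,
      (-(tau * L)) • X2 lam tau x],
    ![(-(lam / 2) * x 0) • X2 lam tau x - tau • X3 x,
      (lam / 2 * x 0) • X1 lam tau x,
      (tau * L) • X1 lam tau x],
    ![(-(tau * L)) • X2 lam tau x,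
      (tau * L) • X1 lam tau x,
      (0 : Pt)]] i j

/-- The connection `∇^L` extended to general vector fields `V = Σᵢ vᵢXᵢ`, `W = Σⱼ wⱼXⱼ`
(with `vᵢ = ωᵢ(V)`, `wⱼ = ωⱼ(W)`):
`∇^L_V W = Σᵢⱼ vᵢ·(Xᵢ(wⱼ)·Xⱼ + wⱼ·∇^L_{Xᵢ}Xⱼ)`. -/
def nabla (lam tau L : ℝ) (V W : VF) (x : Pt) : Pt :=
  ∑ i : Fin 3, ∑ j : Fin 3,
    omf lam tau i x (V x) •
      (dd (Xf lam tau i) (fun y => omf lam tau j y (W y)) x • Xf lam tau j x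
        + omf lam tau j x (W x) • nablaF lam tau L i j x)

/-- The curvature `R^L(V,W)Z = ∇^L_V∇^L_W Z − ∇^L_W∇^L_V Z − ∇^L_{[V,W]}Z`. -/
def RL (lam tau L : ℝ) (V W Z : VF) (x : Pt) : Pt :=
  nabla lam tau L V (nabla lam tau L W Z) x - nabla lam tau L W (nabla lam tau L V Z) x
    - nabla lam tau L (bracket V W) Z x

/-- `p = X₁u`. -/
def pf (lam tau : ℝ) (u : Pt → ℝ) (x : Pt) : ℝ := dd (X1 lam tau) u x

/-- `q = X₂u`. -/
def qf (lam tau : ℝ) (u : Pt → ℝ) (x : Pt) : ℝ := dd (X2 lam tau) u x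

/-- `X₃u`. -/
def X3u (u : Pt → ℝ) (x : Pt) : ℝ := dd X3 u x

/-- `l = √(p² + q²)`. -/
def lf (lam tau : ℝ) (u : Pt → ℝ) (x : Pt) : ℝ :=
  Real.sqrt (pf lam tau u x ^ 2 + qf lam tau u x ^ 2)

/-- `X̃₃ = L^{-1/2} X₃`. -/
def X3t (L : ℝ) : VF := fun x => (Real.sqrt L)⁻¹ • X3 x

/-- `r = X̃₃u = L^{-1/2} X₃u`. -/
def rf (L : ℝ) (u : Pt → ℝ) (x : Pt) : ℝ := (Real.sqrt L)⁻¹ * X3u u x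

/-- `l_L = √(p² + q² + r²)`. -/
def lL (lam tau L : ℝ) (u : Pt → ℝ) (x : Pt) : ℝ :=
  Real.sqrt (pf lam tau u x ^ 2 + qf lam tau u x ^ 2 + rf L u x ^ 2)

/-- `p̄ = p/l`. -/
def pbar (lam tau : ℝ) (u : Pt → ℝ) (x : Pt) : ℝ := pf lam tau u x / lf lam tau u x

/-- `q̄ = q/l`. -/
def qbar (lam tau : ℝ) (u : Pt → ℝ) (x : Pt) : ℝ := qf lam tau u x / lf lam tau u x

/-- `p̄_L = p/l_L`. -/
def pbarL (lam tau L : ℝ) (u : Pt → ℝ) (x : Pt) : ℝ := pf lam tau u x / lL lam tau L u x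

/-- `q̄_L = q/l_L`. -/
def qbarL (lam tau L : ℝ) (u : Pt → ℝ) (x : Pt) : ℝ := qf lam tau u x / lL lam tau L u x

/-- `r̄_L = r/l_L`. -/
def rbarL (lam tau L : ℝ) (u : Pt → ℝ) (x : Pt) : ℝ := rf L u x / lL lam tau L u x

/-- The Riemannian unit normal `ν_L = p̄_L X₁ + q̄_L X₂ + r̄_L X̃₃`. -/
def nuL (lam tau L : ℝ) (u : Pt → ℝ) : VF := fun x =>
  pbarL lam tau L u x • X1 lam tau x + qbarL lam tau L u x • X2 lam tau x
    + rbarL lam tau L u x • X3t L x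

/-- The tangent frame field `ē₁ = q̄X₁ − p̄X₂`. -/
def e1 (lam tau : ℝ) (u : Pt → ℝ) : VF := fun x =>
  qbar lam tau u x • X1 lam tau x - pbar lam tau u x • X2 lam tau x

/-- The tangent frame field `ē₂ = r̄_L p̄ X₁ + r̄_L q̄ X₂ − (l/l_L)X̃₃`. -/
def e2 (lam tau L : ℝ) (u : Pt → ℝ) : VF := fun x =>
  (rbarL lam tau L u x * pbar lam tau u x) • X1 lam tau x
    + (rbarL lam tau L u x * qbar lam tau u x) • X2 lam tau x
    - (lf lam tau u x / lL lam tau L u x) • X3t L x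

section AuxLemmas

variable (lam tau L : ℝ)

lemma continuous_mu : Continuous (mu lam) := by
  unfold mu; fun_prop

lemma mu_pos_eventually {x : Pt} (hx : 0 < mu lam x) : ∀ᶠ y in nhds x, 0 < mu lam y :=
  ((continuous_mu lam).continuousAt).eventually (eventually_gt_nhds hx)

lemma omf_dual {y : Pt} (hy : mu lam y ≠ 0) (i j : Fin 3) :
    omf lam tau j y (Xf lam tau i y) = if i = j then 1 else 0 := by
  fin_cases i <;> fin_cases j <;>
      simp [omf, Xf, X1, X2, X3, Matrix.vecHead, Matrix.vecTail, hy] <;>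
    (try field_simp) <;> (try ring)

lemma omf_comb {y : Pt} (hy : mu lam y ≠ 0) (a b c : ℝ) (j : Fin 3) :
    omf lam tau j y (a • X1 lam tau y + b • X2 lam tau y + c • X3 y) = ![a, b, c] j := by
  fin_cases j <;> simp [omf, X1, X2, X3, Matrix.vecHead, Matrix.vecTail] <;>
    (try field_simp) <;> (try ring)

lemma omf_zero (y : Pt) (j : Fin 3) : omf lam tau j y 0 = 0 := by
  fin_cases j <;> simp [omf]

lemma dd_congr {f g : Pt → ℝ} {y : Pt} (h : f =ᶠ[nhds y] g) (X : VF) :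
    dd X f y = dd X g y := by
  unfold dd; rw [h.fderiv_eq]

@[simp] lemma dd_const (X : VF) (c : ℝ) (y : Pt) : dd X (fun _ => c) y = 0 := by
  simp [dd]

@[simp] lemma dd_coord (X : VF) (c : ℝ) (k : Fin 3) (y : Pt) :
    dd X (fun z => c * z k) y = c * X y k := by
  unfold dd
  have h : HasFDerivAt (fun z : Pt => c * z k) (c • (ContinuousLinearMap.proj k : Pt →L[ℝ] ℝ)) y :=
    ((ContinuousLinearMap.proj k : Pt →L[ℝ] ℝ).hasFDerivAt).const_mul c
  rw [h.fderiv]; simp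

end AuxLemmas

@[simp] lemma dd_coord_neg (X : VF) (c : ℝ) (k : Fin 3) (y : Pt) :
    dd X (fun z => -(c * z k)) y = -(c * X y k) := by
  have h : (fun z : Pt => -(c * z k)) = fun z : Pt => (-c) * z k := by
    funext z; ring
  rw [h, dd_coord]; ring
section AuxLemmas2

variable (lam tau L : ℝ)

lemma nabla_V_frame {y : Pt} (hy : 0 < mu lam y) (V : VF) (b : Fin 3) :
    nabla lam tau L V (Xf lam tau b) y
      = omf lam tau 0 y (V y) • nablaF lam tau L 0 b y
        + omf lam tau 1 y (V y) • nablaF lam tau L 1 b y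
        + omf lam tau 2 y (V y) • nablaF lam tau L 2 b y := by
  have hdd : ∀ i j : Fin 3,
      dd (Xf lam tau i) (fun z => omf lam tau j z (Xf lam tau b z)) y = 0 := by
    intro i j
    have hev : (fun z => omf lam tau j z (Xf lam tau b z)) =ᶠ[nhds y]
        (fun _ => if b = j then (1:ℝ) else 0) :=
      (mu_pos_eventually lam hy).mono fun z hz => omf_dual lam tau hz.ne' b j
    rw [dd_congr hev, dd_const]
  unfold nabla
  simp only [Fin.sum_univ_three, hdd, zero_smul, zero_add,
    omf_dual lam tau hy.ne']
  fin_cases b <;> simp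

lemma nabla_frame {y : Pt} (hy : 0 < mu lam y) (a b : Fin 3) :
    nabla lam tau L (Xf lam tau a) (Xf lam tau b) y = nablaF lam tau L a b y := by
  rw [nabla_V_frame lam tau L hy, omf_dual lam tau hy.ne', omf_dual lam tau hy.ne',
    omf_dual lam tau hy.ne']
  fin_cases a <;> simp

lemma nabla_congr {W W' : VF} {y : Pt} (h : ∀ᶠ z in nhds y, W z = W' z) (V : VF) :
    nabla lam tau L V W y = nabla lam tau L V W' y := by
  unfold nabla
  refine Finset.sum_congr rfl fun i _ => Finset.sum_congr rfl fun j _ => ?_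
  rw [h.self_of_nhds, dd_congr (h.mono fun z hz => by rw [hz])]

lemma nabla_of_zero {V : VF} {y : Pt} (h : V y = 0) (W : VF) :
    nabla lam tau L V W y = 0 := by
  unfold nabla
  simp [h, omf_zero]

lemma nabla_comb {y : Pt} (hy : 0 < mu lam y) (a : Fin 3) (f g h : Pt → ℝ) :
    nabla lam tau L (Xf lam tau a)
        (fun z => f z • X1 lam tau z + g z • X2 lam tau z + h z • X3 z) y
      = dd (Xf lam tau a) f y • X1 lam tau y + dd (Xf lam tau a) g y • X2 lam tau y
        + dd (Xf lam tau a) h y • X3 y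
        + f y • nablaF lam tau L a 0 y + g y • nablaF lam tau L a 1 y
        + h y • nablaF lam tau L a 2 y := by
  have hdd : ∀ i j : Fin 3,
      dd (Xf lam tau i)
        (fun z => omf lam tau j z (f z • X1 lam tau z + g z • X2 lam tau z + h z • X3 z)) y
      = dd (Xf lam tau i) (fun z => ![f z, g z, h z] j) y := fun i j =>
    dd_congr ((mu_pos_eventually lam hy).mono fun z hz =>
      omf_comb lam tau hz.ne' (f z) (g z) (h z) j) _
  unfold nabla
  simp only [Fin.sum_univ_three, hdd, omf_dual lam tau hy.ne',
    omf_comb lam tau hy.ne']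
  have ef : (fun z => f z) = f := rfl
  have eg : (fun z => g z) = g := rfl
  have eh : (fun z => h z) = h := rfl
  have e1 : Xf lam tau 0 = X1 lam tau := rfl
  have e2 : Xf lam tau 1 = X2 lam tau := rfl
  have e3 : Xf lam tau 2 = X3 := rfl
  fin_cases a <;> simp [ef, eg, eh, e1, e2, e3] <;> abel

end AuxLemmas2
section AuxLemmas3

variable (lam tau L : ℝ)

/-- The derivative of `mu`. -/
def Dmu (lam : ℝ) (y : Pt) : Pt →L[ℝ] ℝ :=
  (lam / 2 * y 0) • ContinuousLinearMap.proj 0 + (lam / 2 * y 1) • ContinuousLinearMap.proj 1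

lemma hasFDerivAt_mu (y : Pt) : HasFDerivAt (mu lam) (Dmu lam y) y := by
  have h0 : HasFDerivAt (fun z : Pt => z 0) (ContinuousLinearMap.proj 0 : Pt →L[ℝ] ℝ) y :=
    (ContinuousLinearMap.proj 0 : Pt →L[ℝ] ℝ).hasFDerivAt
  have h1 : HasFDerivAt (fun z : Pt => z 1) (ContinuousLinearMap.proj 1 : Pt →L[ℝ] ℝ) y :=
    (ContinuousLinearMap.proj 1 : Pt →L[ℝ] ℝ).hasFDerivAt
  have hbase := (((h0.mul h0).add (h1.mul h1)).const_mul (lam / 4)).const_add 1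
  have hfun : mu lam = fun z : Pt => 1 + lam / 4 * (z 0 * z 0 + z 1 * z 1) := by
    funext z; unfold mu; ring
  rw [hfun]
  refine hbase.congr_fderiv ?_
  refine ContinuousLinearMap.ext fun v => ?_
  simp [Dmu]
  ring

lemma hasFDerivAt_X1 (y : Pt) :
    HasFDerivAt (X1 lam tau)
      (ContinuousLinearMap.pi ![Dmu lam y, 0, (-tau) • ContinuousLinearMap.proj 1]) y := by
  apply hasFDerivAt_pi''
  intro i
  fin_cases i
  · exact (hasFDerivAt_mu lam y).congr_fderiv (by ext v; simp)
  · exact (hasFDerivAt_const (0:ℝ) y).congr_fderiv (by ext v; simp)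
  · exact (((ContinuousLinearMap.proj 1 : Pt →L[ℝ] ℝ).hasFDerivAt.const_mul
      (-tau)).congr_fderiv (by ext v; simp))

lemma hasFDerivAt_X2 (y : Pt) :
    HasFDerivAt (X2 lam tau)
      (ContinuousLinearMap.pi ![0, Dmu lam y, tau • ContinuousLinearMap.proj 0]) y := by
  apply hasFDerivAt_pi''
  intro i
  fin_cases i
  · exact (hasFDerivAt_const (0:ℝ) y).congr_fderiv (by ext v; simp)
  · exact (hasFDerivAt_mu lam y).congr_fderiv (by ext v; simp)
  · exact (((ContinuousLinearMap.proj 0 : Pt →L[ℝ] ℝ).hasFDerivAt.const_mul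
      tau).congr_fderiv (by ext v; simp))

lemma bracket_12 (y : Pt) :
    bracket (X1 lam tau) (X2 lam tau) y
      = (-(lam / 2) * y 1) • X1 lam tau y + (lam / 2 * y 0) • X2 lam tau y
        + (2 * tau) • X3 y := by
  unfold bracket
  rw [(hasFDerivAt_X1 lam tau y).fderiv, (hasFDerivAt_X2 lam tau y).fderiv]
  funext m
  fin_cases m <;>
    simp [X1, X2, X3, Dmu, mu, ContinuousLinearMap.pi_apply, Matrix.vecHead, Matrix.vecTail] <;>
    ring

lemma bracket_13 (y : Pt) : bracket (X1 lam tau) X3 y = 0 := by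
  unfold bracket
  have h3 : fderiv ℝ X3 y = 0 := by
    have : HasFDerivAt X3 (0 : Pt →L[ℝ] Pt) y := hasFDerivAt_const _ y
    exact this.fderiv
  rw [h3, (hasFDerivAt_X1 lam tau y).fderiv]
  funext m
  fin_cases m <;>
    simp [X1, X3, Dmu, ContinuousLinearMap.pi_apply, Matrix.vecHead, Matrix.vecTail]

lemma bracket_23 (y : Pt) : bracket (X2 lam tau) X3 y = 0 := by
  unfold bracket
  have h3 : fderiv ℝ X3 y = 0 := by
    have : HasFDerivAt X3 (0 : Pt →L[ℝ] Pt) y := hasFDerivAt_const _ y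
    exact this.fderiv
  rw [h3, (hasFDerivAt_X2 lam tau y).fderiv]
  funext m
  fin_cases m <;>
    simp [X2, X3, Dmu, ContinuousLinearMap.pi_apply, Matrix.vecHead, Matrix.vecTail]

end AuxLemmas3
section AuxLemmas4

variable (lam tau L : ℝ)

lemma nabla_nabla {x : Pt} (hx : 0 < mu lam x) (a b c : Fin 3) (f g h : Pt → ℝ)
    (hfgh : ∀ z, nablaF lam tau L b c z
      = f z • X1 lam tau z + g z • X2 lam tau z + h z • X3 z) :
    nabla lam tau L (Xf lam tau a) (nabla lam tau L (Xf lam tau b) (Xf lam tau c)) x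
      = dd (Xf lam tau a) f x • X1 lam tau x + dd (Xf lam tau a) g x • X2 lam tau x
        + dd (Xf lam tau a) h x • X3 x + f x • nablaF lam tau L a 0 x
        + g x • nablaF lam tau L a 1 x + h x • nablaF lam tau L a 2 x := by
  rw [nabla_congr lam tau L ((mu_pos_eventually lam hx).mono fun z hz => by
    rw [nabla_frame lam tau L hz, hfgh z]) _]
  exact nabla_comb lam tau L hx a f g h

lemma nabla_br {x : Pt} (hx : 0 < mu lam x) (c : Fin 3) :
    nabla lam tau L (bracket (Xf lam tau 0) (Xf lam tau 1)) (Xf lam tau c) x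
      = (-(lam / 2) * x 1) • nablaF lam tau L 0 c x
        + (lam / 2 * x 0) • nablaF lam tau L 1 c x
        + (2 * tau) • nablaF lam tau L 2 c x := by
  rw [nabla_V_frame lam tau L hx _ c]
  have hb : bracket (Xf lam tau 0) (Xf lam tau 1) x
      = (-(lam / 2) * x 1) • X1 lam tau x + (lam / 2 * x 0) • X2 lam tau x
        + (2 * tau) • X3 x := bracket_12 lam tau x
  rw [hb, omf_comb lam tau hx.ne' _ _ _ 0, omf_comb lam tau hx.ne' _ _ _ 1,
    omf_comb lam tau hx.ne' _ _ _ 2]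
  simp

lemma nabla_br13 {x : Pt} (W : VF) :
    nabla lam tau L (bracket (Xf lam tau 0) (Xf lam tau 2)) W x = 0 :=
  nabla_of_zero lam tau L (bracket_13 lam tau x) W

lemma nabla_br23 {x : Pt} (W : VF) :
    nabla lam tau L (bracket (Xf lam tau 1) (Xf lam tau 2)) W x = 0 :=
  nabla_of_zero lam tau L (bracket_23 lam tau x) W

end AuxLemmas4
set_option maxHeartbeats 2000000 in
/-- Lemma 2.9: curvature of `∇^L` on the frame. -/
theorem statement4 (lam tau : ℝ) (htau : 0 < tau) (L : ℝ) (hL : 0 < L) (x : Pt)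
    (hx : 0 < mu lam x) :
    RL lam tau L (X1 lam tau) (X2 lam tau) (X1 lam tau) x
        = (3 * tau ^ 2 * L - lam) • X2 lam tau x ∧
    RL lam tau L (X1 lam tau) (X2 lam tau) (X2 lam tau) x
        = (lam - 3 * tau ^ 2 * L) • X1 lam tau x ∧
    RL lam tau L (X1 lam tau) (X2 lam tau) X3 x = 0 ∧
    RL lam tau L (X1 lam tau) X3 (X1 lam tau) x = (-(tau ^ 2 * L)) • X3 x ∧
    RL lam tau L (X1 lam tau) X3 (X2 lam tau) x = 0 ∧
    RL lam tau L (X1 lam tau) X3 X3 x = (tau ^ 2 * L ^ 2) • X1 lam tau x ∧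
    RL lam tau L (X2 lam tau) X3 (X1 lam tau) x = 0 ∧
    RL lam tau L (X2 lam tau) X3 (X2 lam tau) x = (-(tau ^ 2 * L)) • X3 x ∧
    RL lam tau L (X2 lam tau) X3 X3 x = (tau ^ 2 * L ^ 2) • X2 lam tau x := by
  have e0 : X1 lam tau = Xf lam tau 0 := rfl
  have e1 : X2 lam tau = Xf lam tau 1 := rfl
  have e2 : X3 = Xf lam tau 2 := rfl
  -- the coefficient tables for `nablaF b c`
  have h00 : ∀ z : Pt, nablaF lam tau L 0 0 z
      = (fun _ : Pt => (0:ℝ)) z • X1 lam tau z + (fun z : Pt => lam / 2 * z 1) z • X2 lam tau z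
        + (fun _ : Pt => (0:ℝ)) z • X3 z := by
    intro z; funext m
    fin_cases m <;> simp [nablaF, X1, X2, X3, Matrix.vecHead, Matrix.vecTail] <;> ring
  have h01 : ∀ z : Pt, nablaF lam tau L 0 1 z
      = (fun z : Pt => -(lam / 2) * z 1) z • X1 lam tau z + (fun _ : Pt => (0:ℝ)) z • X2 lam tau z
        + (fun _ : Pt => tau) z • X3 z := by
    intro z; funext m
    fin_cases m <;> simp [nablaF, X1, X2, X3, Matrix.vecHead, Matrix.vecTail] <;> ring
  have h02 : ∀ z : Pt, nablaF lam tau L 0 2 z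
      = (fun _ : Pt => (0:ℝ)) z • X1 lam tau z + (fun _ : Pt => -(tau * L)) z • X2 lam tau z
        + (fun _ : Pt => (0:ℝ)) z • X3 z := by
    intro z; funext m
    fin_cases m <;> simp [nablaF, X1, X2, X3, Matrix.vecHead, Matrix.vecTail] <;> ring
  have h10 : ∀ z : Pt, nablaF lam tau L 1 0 z
      = (fun _ : Pt => (0:ℝ)) z • X1 lam tau z + (fun z : Pt => -(lam / 2) * z 0) z • X2 lam tau z
        + (fun _ : Pt => -tau) z • X3 z := by
    intro z; funext m
    fin_cases m <;> simp [nablaF, X1, X2, X3, Matrix.vecHead, Matrix.vecTail] <;> ring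
  have h11 : ∀ z : Pt, nablaF lam tau L 1 1 z
      = (fun z : Pt => lam / 2 * z 0) z • X1 lam tau z + (fun _ : Pt => (0:ℝ)) z • X2 lam tau z
        + (fun _ : Pt => (0:ℝ)) z • X3 z := by
    intro z; funext m
    fin_cases m <;> simp [nablaF, X1, X2, X3, Matrix.vecHead, Matrix.vecTail] <;> ring
  have h12 : ∀ z : Pt, nablaF lam tau L 1 2 z
      = (fun _ : Pt => tau * L) z • X1 lam tau z + (fun _ : Pt => (0:ℝ)) z • X2 lam tau z
        + (fun _ : Pt => (0:ℝ)) z • X3 z := by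
    intro z; funext m
    fin_cases m <;> simp [nablaF, X1, X2, X3, Matrix.vecHead, Matrix.vecTail] <;> ring
  have h20 : ∀ z : Pt, nablaF lam tau L 2 0 z
      = (fun _ : Pt => (0:ℝ)) z • X1 lam tau z + (fun _ : Pt => -(tau * L)) z • X2 lam tau z
        + (fun _ : Pt => (0:ℝ)) z • X3 z := by
    intro z; funext m
    fin_cases m <;> simp [nablaF, X1, X2, X3, Matrix.vecHead, Matrix.vecTail] <;> ring
  have h21 : ∀ z : Pt, nablaF lam tau L 2 1 z
      = (fun _ : Pt => tau * L) z • X1 lam tau z + (fun _ : Pt => (0:ℝ)) z • X2 lam tau z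
        + (fun _ : Pt => (0:ℝ)) z • X3 z := by
    intro z; funext m
    fin_cases m <;> simp [nablaF, X1, X2, X3, Matrix.vecHead, Matrix.vecTail] <;> ring
  have h22 : ∀ z : Pt, nablaF lam tau L 2 2 z
      = (fun _ : Pt => (0:ℝ)) z • X1 lam tau z + (fun _ : Pt => (0:ℝ)) z • X2 lam tau z
        + (fun _ : Pt => (0:ℝ)) z • X3 z := by
    intro z; funext m
    fin_cases m <;> simp [nablaF, X1, X2, X3, Matrix.vecHead, Matrix.vecTail]
  refine ⟨?_, ?_, ?_, ?_, ?_, ?_, ?_, ?_, ?_⟩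
  · -- R(X1,X2)X1
    unfold RL
    rw [e0, e1]
    rw [nabla_nabla lam tau L hx 0 1 0 _ _ _ h10,
      nabla_nabla lam tau L hx 1 0 0 _ _ _ h00,
      nabla_br lam tau L hx 0]
    funext m
    fin_cases m <;>
      simp [Xf, X1, X2, X3, nablaF, mu, Matrix.vecHead, Matrix.vecTail] <;> ring
  · -- R(X1,X2)X2
    unfold RL
    rw [e0, e1]
    rw [nabla_nabla lam tau L hx 0 1 1 _ _ _ h11,
      nabla_nabla lam tau L hx 1 0 1 _ _ _ h01,
      nabla_br lam tau L hx 1]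
    funext m
    fin_cases m <;>
        simp [Xf, X1, X2, X3, nablaF, mu, Matrix.vecHead, Matrix.vecTail] <;>
      (try ring)
  · -- R(X1,X2)X3
    unfold RL
    rw [e0, e1, e2]
    rw [nabla_nabla lam tau L hx 0 1 2 _ _ _ h12,
      nabla_nabla lam tau L hx 1 0 2 _ _ _ h02,
      nabla_br lam tau L hx 2]
    funext m
    fin_cases m <;>
        simp [Xf, X1, X2, X3, nablaF, mu, Matrix.vecHead, Matrix.vecTail] <;>
      (try ring)
  · -- R(X1,X3)X1
    unfold RL
    rw [e0, e2]
    rw [nabla_nabla lam tau L hx 0 2 0 _ _ _ h20,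
      nabla_nabla lam tau L hx 2 0 0 _ _ _ h00,
      nabla_br13 lam tau L (Xf lam tau 0)]
    funext m
    fin_cases m <;>
        simp [Xf, X1, X2, X3, nablaF, mu, Matrix.vecHead, Matrix.vecTail] <;>
      (try ring)
  · -- R(X1,X3)X2
    unfold RL
    rw [e0, e1, e2]
    rw [nabla_nabla lam tau L hx 0 2 1 _ _ _ h21,
      nabla_nabla lam tau L hx 2 0 1 _ _ _ h01,
      nabla_br13 lam tau L (Xf lam tau 1)]
    funext m
    fin_cases m <;>
        simp [Xf, X1, X2, X3, nablaF, mu, Matrix.vecHead, Matrix.vecTail] <;>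
      (try ring)
  · -- R(X1,X3)X3
    unfold RL
    rw [e0, e2]
    rw [nabla_nabla lam tau L hx 0 2 2 _ _ _ h22,
      nabla_nabla lam tau L hx 2 0 2 _ _ _ h02,
      nabla_br13 lam tau L (Xf lam tau 2)]
    funext m
    fin_cases m <;>
        simp [Xf, X1, X2, X3, nablaF, mu, Matrix.vecHead, Matrix.vecTail] <;>
      (try ring)
  · -- R(X2,X3)X1
    unfold RL
    rw [e0, e1, e2]
    rw [nabla_nabla lam tau L hx 1 2 0 _ _ _ h20,
      nabla_nabla lam tau L hx 2 1 0 _ _ _ h10,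
      nabla_br23 lam tau L (Xf lam tau 0)]
    funext m
    fin_cases m <;>
        simp [Xf, X1, X2, X3, nablaF, mu, Matrix.vecHead, Matrix.vecTail] <;>
      (try ring)
  · -- R(X2,X3)X2
    unfold RL
    rw [e1, e2]
    rw [nabla_nabla lam tau L hx 1 2 1 _ _ _ h21,
      nabla_nabla lam tau L hx 2 1 1 _ _ _ h11,
      nabla_br23 lam tau L (Xf lam tau 1)]
    funext m
    fin_cases m <;>
        simp [Xf, X1, X2, X3, nablaF, mu, Matrix.vecHead, Matrix.vecTail] <;>
      (try ring)
  · -- R(X2,X3)X3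
    unfold RL
    rw [e1, e2]
    rw [nabla_nabla lam tau L hx 1 2 2 _ _ _ h22,
      nabla_nabla lam tau L hx 2 1 2 _ _ _ h12,
      nabla_br23 lam tau L (Xf lam tau 2)]
    funext m
    fin_cases m <;>
        simp [Xf, X1, X2, X3, nablaF, mu, Matrix.vecHead, Matrix.vecTail] <;>
      (try ring)
end
end

section
/- (Proposition 2.8.) Let u : N → ℝ be C²-smooth and x ∈ N a noncharacteristic point. Define the Riemannian mean curvature 𝓗_L(x) := h₁₁(x) + h₂₂(x), where h₁₁ = (l/l_L)[X₁(p̄) + X₂(q̄)] − (λ/2)(p̄_L x₁ + q̄_L x₂) and h₂₂ = −(l²/l_L²)·(r̄_L p̄·X₁(r/l) + r̄_L q̄·X₂(r/l)) + X̃₃(r̄_L) + (p̄_L − q̄_L)·p̄·q̄·r̄_L²·(λ/2)x₂ (all quantities depending on L). Then, as L → ∞ along (0,∞), 𝓗_L(x) tends to the horizontal mean curvature 𝓗_∞(x) = X₁(p̄)(x) + X₂(q̄)(x) − (λ/2)(p̄(x)·x₁ + q̄(x)·x₂). -/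
/- Common setup for the BCV spaces (twisted BCV paper formalization). -/

noncomputable section

open scoped BigOperators

/-- Auxiliary: `mu` is continuously differentiable. -/
lemma aux_contDiff_mu (lam : ℝ) : ContDiff ℝ 1 (mu lam) := by
  unfold mu; fun_prop

lemma aux_contDiff_X1 (lam tau : ℝ) : ContDiff ℝ 1 (X1 lam tau) := by
  unfold X1
  rw [contDiff_pi]
  intro i
  fin_cases i <;> simp
  · exact aux_contDiff_mu lam
  · exact contDiff_const
  · fun_prop

lemma aux_contDiff_X2 (lam tau : ℝ) : ContDiff ℝ 1 (X2 lam tau) := by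
  unfold X2
  rw [contDiff_pi]
  intro i
  fin_cases i <;> simp
  · exact contDiff_const
  · exact aux_contDiff_mu lam
  · fun_prop

lemma aux_contDiff_X3 : ContDiff ℝ 1 X3 := by
  unfold X3; exact contDiff_const

lemma aux_contDiff_dd {u : Pt → ℝ} (hu : ContDiff ℝ 2 u) {X : VF} (hX : ContDiff ℝ 1 X) :
    ContDiff ℝ 1 (fun y => fderiv ℝ u y (X y)) :=
  (hu.fderiv_right (by norm_num)).clm_apply hX

lemma aux_diffAt_div {f g : Pt → ℝ} {x : Pt} (hf : DifferentiableAt ℝ f x)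
    (hg : DifferentiableAt ℝ g x) (h0 : g x ≠ 0) :
    DifferentiableAt ℝ (fun y => f y / g y) x := by
  simpa [div_eq_mul_inv] using hf.fun_mul (hg.fun_inv h0)

lemma aux_sqrt_tendsto_atTop : Filter.Tendsto Real.sqrt Filter.atTop Filter.atTop := by
  apply Filter.tendsto_atTop_atTop.2
  intro b
  refine ⟨(max b 0) ^ 2, fun a ha => le_trans (le_max_left b 0) ?_⟩
  rw [← Real.sqrt_sq (le_max_right b 0)]
  exact Real.sqrt_le_sqrt ha

lemma aux_inv_sqrt_tendsto : Filter.Tendsto (fun L : ℝ => (Real.sqrt L)⁻¹)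
    Filter.atTop (nhds 0) :=
  tendsto_inv_atTop_zero.comp aux_sqrt_tendsto_atTop

set_option maxHeartbeats 1600000 in
/-- Proposition 2.8: the Riemannian mean curvature `𝓗_L = h₁₁ + h₂₂`
tends to the horizontal mean curvature `𝓗_∞` as `L → ∞`. -/
theorem statement7 (lam tau : ℝ) (htau : 0 < tau)
    (u : Pt → ℝ) (hu : ContDiff ℝ 2 u) (x : Pt) (hx : 0 < mu lam x)
    (hnc : lf lam tau u x ≠ 0) :
    Filter.Tendsto (fun L : ℝ =>
        (lf lam tau u x / lL lam tau L u x *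
            (dd (X1 lam tau) (pbar lam tau u) x + dd (X2 lam tau) (qbar lam tau u) x)
          - lam / 2 * (pbarL lam tau L u x * x 0 + qbarL lam tau L u x * x 1))
        + (-(lf lam tau u x ^ 2 / lL lam tau L u x ^ 2) *
              (rbarL lam tau L u x * pbar lam tau u x *
                  dd (X1 lam tau) (fun y => rf L u y / lf lam tau u y) x
                + rbarL lam tau L u x * qbar lam tau u x *
                  dd (X2 lam tau) (fun y => rf L u y / lf lam tau u y) x)
            + dd (X3t L) (rbarL lam tau L u) x
            + (pbarL lam tau L u x - qbarL lam tau L u x) * pbar lam tau u x *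
                qbar lam tau u x * rbarL lam tau L u x ^ 2 * (lam / 2) * x 1))
      Filter.atTop
      (nhds (dd (X1 lam tau) (pbar lam tau u) x + dd (X2 lam tau) (qbar lam tau u) x
        - lam / 2 * (pbar lam tau u x * x 0 + qbar lam tau u x * x 1))) := by
  classical
  -- abbreviations for the key scalar quantities at `x`
  set p := pf lam tau u x with hp
  set q := qf lam tau u x with hq
  set a := X3u u x with ha
  have hlfx : lf lam tau u x = Real.sqrt (p ^ 2 + q ^ 2) := rfl
  have hb2 : 0 < p ^ 2 + q ^ 2 := by
    rcases lt_or_eq_of_le (by positivity : (0:ℝ) ≤ p ^ 2 + q ^ 2) with h | h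
    · exact h
    · exact absurd (by rw [hlfx, ← h, Real.sqrt_zero]) hnc
  set b := lf lam tau u x with hb
  have hbpos : 0 < b := by rw [hlfx]; exact Real.sqrt_pos.2 hb2
  set c1 := dd (X1 lam tau) (pbar lam tau u) x with hc1
  set c2 := dd (X2 lam tau) (qbar lam tau u) x with hc2
  -- differentiability of the basic quantities
  have hpfc : ContDiff ℝ 1 (pf lam tau u) := aux_contDiff_dd hu (aux_contDiff_X1 lam tau)
  have hqfc : ContDiff ℝ 1 (qf lam tau u) := aux_contDiff_dd hu (aux_contDiff_X2 lam tau)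
  have hfc : ContDiff ℝ 1 (X3u u) := aux_contDiff_dd hu aux_contDiff_X3
  have hpfx : DifferentiableAt ℝ (pf lam tau u) x := (hpfc.differentiable one_ne_zero) x
  have hqfx : DifferentiableAt ℝ (qf lam tau u) x := (hqfc.differentiable one_ne_zero) x
  have hfx : DifferentiableAt ℝ (X3u u) x := (hfc.differentiable one_ne_zero) x
  have hgd : DifferentiableAt ℝ (fun y => pf lam tau u y ^ 2 + qf lam tau u y ^ 2) x :=
    (hpfx.pow 2).add (hqfx.pow 2)
  have hgx_ne : pf lam tau u x ^ 2 + qf lam tau u x ^ 2 ≠ 0 := by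
    rw [← hp, ← hq]; exact hb2.ne'
  have hlf_diff : DifferentiableAt ℝ (lf lam tau u) x := hgd.sqrt hgx_ne
  have hdivDiff : DifferentiableAt ℝ (fun y => X3u u y / lf lam tau u y) x :=
    aux_diffAt_div hfx hlf_diff hnc
  -- named constants for the model function
  set K1 := dd (X1 lam tau) (fun y => X3u u y / lf lam tau u y) x with hK1
  set K2 := dd (X2 lam tau) (fun y => X3u u y / lf lam tau u y) x with hK2
  set e3v : Pt := ![0, 0, 1] with he3
  set A1d := fderiv ℝ (pf lam tau u) x e3v with hA1d
  set A2d := fderiv ℝ (qf lam tau u) x e3v with hA2d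
  set A3d := fderiv ℝ (X3u u) x e3v with hA3d
  -- directional derivative machinery
  have hgam : HasDerivAt (fun s : ℝ => x + s • e3v) e3v 0 := by
    simpa using ((hasDerivAt_id (0 : ℝ)).smul_const e3v).const_add x
  have key : ∀ F : Pt → ℝ, DifferentiableAt ℝ F x →
      HasDerivAt (fun s : ℝ => F (x + s • e3v)) (fderiv ℝ F x e3v) 0 := by
    intro F hF
    have hl : HasFDerivAt F (fderiv ℝ F x) (x + (0:ℝ) • e3v) := by
      rw [zero_smul, add_zero]; exact hF.hasFDerivAt
    have h := hl.comp_hasDerivAt 0 hgam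
    exact h
  have h0 : x + (0 : ℝ) • e3v = x := by simp
  -- the model function `G`
  have hs0pos : ∀ t : ℝ, 0 < Real.sqrt (p ^ 2 + q ^ 2 + (t * a) ^ 2) :=
    fun t => Real.sqrt_pos.2 (by nlinarith [sq_nonneg (t * a)])
  set H : ℝ → ℝ → ℝ → ℝ := fun t I s =>
    (b * I * (c1 + c2) - lam / 2 * (p * I * x 0 + q * I * x 1))
    + (-(b ^ 2 * I ^ 2) * (t * a * I * (p * b⁻¹) * (t * K1) + t * a * I * (q * b⁻¹) * (t * K2))
       + t * ((t * A3d * s - t * a * ((2 * p * A1d + 2 * q * A2d + 2 * (t * a) * (t * A3d))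
            * (2⁻¹ * I))) * I ^ 2)
       + (p * I - q * I) * (p * b⁻¹) * (q * b⁻¹) * (t * a * I) ^ 2 * (lam / 2) * x 1) with hH
  set G : ℝ → ℝ := fun t => H t (Real.sqrt (p ^ 2 + q ^ 2 + (t * a) ^ 2))⁻¹
      (Real.sqrt (p ^ 2 + q ^ 2 + (t * a) ^ 2)) with hG
  -- continuity of `G` at `0`
  have hscont : Continuous (fun t : ℝ => Real.sqrt (p ^ 2 + q ^ 2 + (t * a) ^ 2)) := by
    fun_prop
  have hGcont : ContinuousAt G 0 := by
    have hHc : Continuous fun v : ℝ × ℝ × ℝ => H v.1 v.2.1 v.2.2 := by rw [hH]; fun_prop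
    have hmap : ContinuousAt (fun t : ℝ =>
        ((t, ((Real.sqrt (p ^ 2 + q ^ 2 + (t * a) ^ 2))⁻¹,
          Real.sqrt (p ^ 2 + q ^ 2 + (t * a) ^ 2))) : ℝ × ℝ × ℝ)) 0 :=
      continuousAt_id.prodMk ((hscont.continuousAt.inv₀ (hs0pos 0).ne').prodMk hscont.continuousAt)
    exact ContinuousAt.comp hHc.continuousAt hmap
  -- value of `G` at `0`
  have hsq0 : Real.sqrt (p ^ 2 + q ^ 2 + ((0:ℝ) * a) ^ 2) = b := by
    rw [hlfx]; norm_num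
  have hG0 : G 0 = c1 + c2 - lam / 2 * (p / b * x 0 + q / b * x 1) := by
    rw [hG]
    simp only
    rw [hsq0, hH]
    simp only
    field_simp
    all_goals ring
  -- assemble the limit
  have hcomp : Filter.Tendsto (fun L : ℝ => G (Real.sqrt L)⁻¹) Filter.atTop (nhds (G 0)) :=
    hGcont.tendsto.comp aux_inv_sqrt_tendsto
  rw [hG0] at hcomp
  have hpbar : pbar lam tau u x = p / b := rfl
  have hqbar : qbar lam tau u x = q / b := rfl
  rw [hpbar, hqbar]
  refine Filter.Tendsto.congr' ?_ hcomp
  filter_upwards [Filter.eventually_gt_atTop (0:ℝ)] with L hL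
  set t := (Real.sqrt L)⁻¹ with ht
  -- rewrite each `L`-dependent quantity at `x` in terms of `t`
  have e_lL : lL lam tau L u x = Real.sqrt (p ^ 2 + q ^ 2 + (t * a) ^ 2) := rfl
  have e_pbarL : pbarL lam tau L u x = p * (Real.sqrt (p ^ 2 + q ^ 2 + (t * a) ^ 2))⁻¹ := by
    unfold pbarL
    rw [← hp, e_lL, div_eq_mul_inv]
  have e_qbarL : qbarL lam tau L u x = q * (Real.sqrt (p ^ 2 + q ^ 2 + (t * a) ^ 2))⁻¹ := by
    unfold qbarL
    rw [← hq, e_lL, div_eq_mul_inv]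
  have e_rfx : rf L u x = t * a := rfl
  have e_rbarL : rbarL lam tau L u x = t * a * (Real.sqrt (p ^ 2 + q ^ 2 + (t * a) ^ 2))⁻¹ := by
    unfold rbarL
    rw [e_rfx, e_lL, div_eq_mul_inv]
  -- the `X₁(r/l)` and `X₂(r/l)` terms
  have hfun : (fun y => rf L u y / lf lam tau u y)
      = fun y => (Real.sqrt L)⁻¹ * (X3u u y / lf lam tau u y) := by
    funext y
    show (Real.sqrt L)⁻¹ * X3u u y / lf lam tau u y = _
    rw [mul_div_assoc]
  have e_K1 : dd (X1 lam tau) (fun y => rf L u y / lf lam tau u y) x = t * K1 := by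
    unfold dd
    rw [hfun, fderiv_const_mul hdivDiff]
    rw [ContinuousLinearMap.smul_apply, smul_eq_mul, ← ht, hK1]
    rfl
  have e_K2 : dd (X2 lam tau) (fun y => rf L u y / lf lam tau u y) x = t * K2 := by
    unfold dd
    rw [hfun, fderiv_const_mul hdivDiff]
    rw [ContinuousLinearMap.smul_apply, smul_eq_mul, ← ht, hK2]
    rfl
  -- the `X̃₃(r̄_L)` term
  have hrf_diff : DifferentiableAt ℝ (rf L u) x := hfx.const_mul (Real.sqrt L)⁻¹
  have hinner_diff : DifferentiableAt ℝ
      (fun y => pf lam tau u y ^ 2 + qf lam tau u y ^ 2 + rf L u y ^ 2) x :=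
    ((hpfx.pow 2).add (hqfx.pow 2)).add (hrf_diff.pow 2)
  have hinner_ne : pf lam tau u x ^ 2 + qf lam tau u x ^ 2 + rf L u x ^ 2 ≠ 0 := by
    rw [← hp, ← hq]
    nlinarith [sq_nonneg (rf L u x), hb2]
  have hlL_diff : DifferentiableAt ℝ (lL lam tau L u) x := by
    unfold lL; exact hinner_diff.sqrt hinner_ne
  have hlL_ne : lL lam tau L u x ≠ 0 := by rw [e_lL]; exact (hs0pos t).ne'
  have hrbardiff : DifferentiableAt ℝ (rbarL lam tau L u) x := by
    unfold rbarL; exact aux_diffAt_div hrf_diff hlL_diff hlL_ne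
  have hW := key (rbarL lam tau L u) hrbardiff
  have hA1 : HasDerivAt (fun s : ℝ => pf lam tau u (x + s • e3v)) A1d 0 := by
    rw [hA1d]; exact key _ hpfx
  have hA2 : HasDerivAt (fun s : ℝ => qf lam tau u (x + s • e3v)) A2d 0 := by
    rw [hA2d]; exact key _ hqfx
  have hA3 : HasDerivAt (fun s : ℝ => X3u u (x + s • e3v)) A3d 0 := by
    rw [hA3d]; exact key _ hfx
  have hDd := ((hA1.fun_pow 2).fun_add (hA2.fun_pow 2)).fun_add ((hA3.const_mul t).fun_pow 2)
  have hDne : pf lam tau u (x + (0:ℝ) • e3v) ^ 2 + qf lam tau u (x + (0:ℝ) • e3v) ^ 2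
      + (t * X3u u (x + (0:ℝ) • e3v)) ^ 2 ≠ 0 := by
    rw [h0, ← hp, ← hq, ← ha]
    nlinarith [hb2, sq_nonneg (t * a)]
  have hsq2 := hDd.sqrt hDne
  have hden_ne : Real.sqrt (pf lam tau u (x + (0:ℝ) • e3v) ^ 2
      + qf lam tau u (x + (0:ℝ) • e3v) ^ 2 + (t * X3u u (x + (0:ℝ) • e3v)) ^ 2) ≠ 0 := by
    rw [h0, ← hp, ← hq, ← ha]
    exact (hs0pos t).ne'
  have hdiv := (hA3.const_mul t).fun_div hsq2 hden_ne
  have hval := hW.unique hdiv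
  rw [h0, ← hp, ← hq, ← ha] at hval
  have e_T2 : dd (X3t L) (rbarL lam tau L u) x
      = t * ((t * A3d * Real.sqrt (p ^ 2 + q ^ 2 + (t * a) ^ 2)
          - t * a * ((2 * p * A1d + 2 * q * A2d + 2 * (t * a) * (t * A3d))
            * (2⁻¹ * (Real.sqrt (p ^ 2 + q ^ 2 + (t * a) ^ 2))⁻¹)))
          * ((Real.sqrt (p ^ 2 + q ^ 2 + (t * a) ^ 2))⁻¹) ^ 2) := by
    have hdd2 : dd (X3t L) (rbarL lam tau L u) x
        = t * fderiv ℝ (rbarL lam tau L u) x e3v := by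
      unfold dd X3t
      rw [show X3 x = e3v from rfl, ContinuousLinearMap.map_smul, smul_eq_mul, ← ht]
    rw [hdd2, hval]
    have hs_ne : Real.sqrt (p ^ 2 + q ^ 2 + (t * a) ^ 2) ≠ 0 := (hs0pos t).ne'
    push_cast
    field_simp
    all_goals ring
  -- put everything together
  rw [hG]
  simp only
  rw [hH]
  simp only
  rw [e_lL, e_pbarL, e_qbarL, e_rbarL, e_K1, e_K2, e_T2]
  ring
end
end

section
/- Let u : N → ℝ be smooth (C^∞), x ∈ N a noncharacteristic point, and h : N → ℝ a C² function. For L > 0 define the fiber Laplacian Δ_F h := −ē₁(ē₁(h)) − ē₂(ē₂(h)) + g_L(∇^L_{ē₁}ē₁, ē₂)·ē₂(h) + g_L(∇^L_{ē₂}ē₂, ē₁)·ē₁(h) (all quantities depending on L through ē₂, r̄_L, l_L). Then, as L → ∞ along (0,∞), (Δ_F h)(x) tends to −ē₁(ē₁(h))(x) − (2τ·X₃u(x)/l(x))·ē₁(h)(x). -/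
/- Common setup for the BCV spaces (twisted BCV paper formalization). -/

noncomputable section

open scoped BigOperators

section Aux

variable (lam tau : ℝ) (u : Pt → ℝ)

/-- `l_L` as a function of `s = L^{-1/2}`. -/
def lLs (s : ℝ) (y : Pt) : ℝ :=
  Real.sqrt (pf lam tau u y ^ 2 + qf lam tau u y ^ 2 + s ^ 2 * X3u u y ^ 2)

def Af (s : ℝ) (y : Pt) : ℝ :=
  X3u u y * pf lam tau u y / (lLs lam tau u s y * lf lam tau u y)

def Bf (s : ℝ) (y : Pt) : ℝ :=
  X3u u y * qf lam tau u y / (lLs lam tau u s y * lf lam tau u y)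

def Cf (s : ℝ) (y : Pt) : ℝ := -(lf lam tau u y / lLs lam tau u s y)

def Ef (s : ℝ) : VF := fun y =>
  Af lam tau u s y • X1 lam tau y + Bf lam tau u s y • X2 lam tau y + Cf lam tau u s y • X3 y

lemma e2_eq (L : ℝ) : e2 lam tau L u = fun y => (Real.sqrt L)⁻¹ • Ef lam tau u (Real.sqrt L)⁻¹ y := by
  funext y
  have hlL : lL lam tau L u y = lLs lam tau u (Real.sqrt L)⁻¹ y := by
    simp [lL, lLs, rf, mul_pow]
  simp only [e2, Ef, X3t, rbarL, pbar, qbar, Af, Bf, Cf, hlL, rf, smul_add, smul_smul, smul_sub]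
  module

end Aux
section Aux2

variable {lam tau : ℝ} {u : Pt → ℝ}

lemma omf_add (i : Fin 3) (y v w : Pt) :
    omf lam tau i y (v + w) = omf lam tau i y v + omf lam tau i y w := by
  fin_cases i <;> simp [omf] <;> ring

lemma omf_smul (i : Fin 3) (y : Pt) (a : ℝ) (v : Pt) :
    omf lam tau i y (a • v) = a * omf lam tau i y v := by
  fin_cases i <;> simp [omf] <;> ring

lemma omf_neg (i : Fin 3) (y v : Pt) : omf lam tau i y (-v) = -omf lam tau i y v := by
  fin_cases i <;> simp [omf] <;> ring

lemma omf_sub (i : Fin 3) (y v w : Pt) :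
    omf lam tau i y (v - w) = omf lam tau i y v - omf lam tau i y w := by
  rw [sub_eq_add_neg, omf_add, omf_neg]; ring

lemma omf_X1 (i : Fin 3) {y : Pt} (hy : mu lam y ≠ 0) :
    omf lam tau i y (X1 lam tau y) = ![1, 0, 0] i := by
  fin_cases i <;> simp [omf, X1, hy] <;> field_simp <;> ring

lemma omf_X2 (i : Fin 3) {y : Pt} (hy : mu lam y ≠ 0) :
    omf lam tau i y (X2 lam tau y) = ![0, 1, 0] i := by
  fin_cases i <;> simp [omf, X2, hy] <;> field_simp <;> ring

lemma omf_X3 (i : Fin 3) (y : Pt) :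
    omf lam tau i y (X3 y) = ![0, 0, 1] i := by
  fin_cases i <;> simp [omf, X3]

lemma omf_vec (i : Fin 3) {y : Pt} (hy : mu lam y ≠ 0) (a b c : ℝ) :
    omf lam tau i y (a • X1 lam tau y + b • X2 lam tau y + c • X3 y) = ![a, b, c] i := by
  rw [omf_add, omf_add, omf_smul, omf_smul, omf_smul, omf_X1 i hy, omf_X2 i hy, omf_X3]
  fin_cases i <;> simp

lemma omf_e1 (i : Fin 3) {y : Pt} (hy : mu lam y ≠ 0) :
    omf lam tau i y (e1 lam tau u y) =
      ![qbar lam tau u y, -pbar lam tau u y, 0] i := by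
  have : e1 lam tau u y = qbar lam tau u y • X1 lam tau y + (-pbar lam tau u y) • X2 lam tau y
      + (0:ℝ) • X3 y := by
    simp [e1, sub_eq_add_neg, neg_smul]
  rw [this, omf_vec i hy]

lemma omf_Ef (i : Fin 3) {y : Pt} (hy : mu lam y ≠ 0) (s : ℝ) :
    omf lam tau i y (Ef lam tau u s y) =
      ![Af lam tau u s y, Bf lam tau u s y, Cf lam tau u s y] i :=
  omf_vec i hy _ _ _

end Aux2
section Aux3

def Gf (lam tau : ℝ) (u h : Pt → ℝ) (s : ℝ) (y : Pt) : ℝ := fderiv ℝ h y (Ef lam tau u s y)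

variable {lam tau : ℝ} {u h : Pt → ℝ} {x : Pt}

lemma contDiff_coord (i : Fin 3) : ContDiff ℝ (⊤:ℕ∞) (fun y : Pt => y i) :=
  contDiff_pi.mp contDiff_id i

lemma contDiff_mu : ContDiff ℝ (⊤:ℕ∞) (mu lam) :=
  contDiff_const.add (contDiff_const.mul
    (((contDiff_coord 0).pow 2).add ((contDiff_coord 1).pow 2)))

lemma contDiff_X1 : ContDiff ℝ (⊤:ℕ∞) (X1 lam tau) := by
  apply contDiff_pi.mpr; intro i; fin_cases i <;> simp [X1]
  · exact contDiff_mu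
  · exact contDiff_const
  · exact (contDiff_const.mul (contDiff_coord 1)).neg

lemma contDiff_X2 : ContDiff ℝ (⊤:ℕ∞) (X2 lam tau) := by
  apply contDiff_pi.mpr; intro i; fin_cases i <;> simp [X2]
  · exact contDiff_const
  · exact contDiff_mu
  · exact contDiff_const.mul (contDiff_coord 0)

lemma contDiff_pf (hu : ContDiff ℝ (⊤:ℕ∞) u) : ContDiff ℝ (⊤:ℕ∞) (pf lam tau u) := by
  unfold pf dd
  exact (hu.fderiv_right (by simp)).clm_apply contDiff_X1

lemma contDiff_qf (hu : ContDiff ℝ (⊤:ℕ∞) u) : ContDiff ℝ (⊤:ℕ∞) (qf lam tau u) := by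
  unfold qf dd
  exact (hu.fderiv_right (by simp)).clm_apply contDiff_X2

lemma contDiff_X3u (hu : ContDiff ℝ (⊤:ℕ∞) u) : ContDiff ℝ (⊤:ℕ∞) (X3u u) := by
  unfold X3u dd
  exact (hu.fderiv_right (by simp)).clm_apply contDiff_const

end Aux3
section Aux4

variable {lam tau : ℝ} {u h : Pt → ℝ} {x : Pt}

lemma l2_pos (hnc : lf lam tau u x ≠ 0) :
    0 < pf lam tau u x ^ 2 + qf lam tau u x ^ 2 := by
  rcases (by positivity : (0:ℝ) ≤ pf lam tau u x ^ 2 + qf lam tau u x ^ 2).lt_or_eq with h' | h'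
  · exact h'
  · exact absurd (by rw [lf, ← h', Real.sqrt_zero]) hnc

lemma lf_pos (hnc : lf lam tau u x ≠ 0) : 0 < lf lam tau u x :=
  lt_of_le_of_ne (Real.sqrt_nonneg _) (Ne.symm hnc)

lemma contDiffAt_arg_joint (hu : ContDiff ℝ (⊤:ℕ∞) u) :
    ContDiff ℝ (⊤:ℕ∞) (fun p : ℝ × Pt =>
      pf lam tau u p.2 ^ 2 + qf lam tau u p.2 ^ 2 + p.1 ^ 2 * X3u u p.2 ^ 2) :=
  ((((contDiff_pf hu).comp contDiff_snd).pow 2).add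
    (((contDiff_qf hu).comp contDiff_snd).pow 2)).add
    ((contDiff_fst.pow 2).mul (((contDiff_X3u hu).comp contDiff_snd).pow 2))

lemma arg_pos (hnc : lf lam tau u x ≠ 0) (s₀ : ℝ) :
    0 < pf lam tau u x ^ 2 + qf lam tau u x ^ 2 + s₀ ^ 2 * X3u u x ^ 2 := by
  have := l2_pos hnc; positivity

lemma contDiffAt_lLs_joint (hu : ContDiff ℝ (⊤:ℕ∞) u) (hnc : lf lam tau u x ≠ 0) (s₀ : ℝ) :
    ContDiffAt ℝ (⊤:ℕ∞) (fun p : ℝ × Pt => lLs lam tau u p.1 p.2) (s₀, x) := by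
  have := (Real.contDiffAt_sqrt (n := ((⊤:ℕ∞) : WithTop ℕ∞)) (arg_pos hnc s₀).ne').comp
    (s₀, x) (contDiffAt_arg_joint hu).contDiffAt
  exact this

lemma lLs_pos (hnc : lf lam tau u x ≠ 0) (s₀ : ℝ) : 0 < lLs lam tau u s₀ x :=
  Real.sqrt_pos.mpr (arg_pos hnc s₀)

lemma contDiffAt_lf (hu : ContDiff ℝ (⊤:ℕ∞) u) (hnc : lf lam tau u x ≠ 0) :
    ContDiffAt ℝ (⊤:ℕ∞) (lf lam tau u) x := by
  have := (Real.contDiffAt_sqrt (n := ((⊤:ℕ∞) : WithTop ℕ∞)) (l2_pos hnc).ne').comp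
    x ((((contDiff_pf hu).pow 2).add ((contDiff_qf hu).pow 2)).contDiffAt
      (x := x))
  exact this

lemma contDiffAt_Af_joint (hu : ContDiff ℝ (⊤:ℕ∞) u) (hnc : lf lam tau u x ≠ 0) (s₀ : ℝ) :
    ContDiffAt ℝ (⊤:ℕ∞) (fun p : ℝ × Pt => Af lam tau u p.1 p.2) (s₀, x) := by
  apply ContDiffAt.div
  · exact (((contDiff_X3u hu).comp contDiff_snd).mul
      ((contDiff_pf hu).comp contDiff_snd)).contDiffAt
  · exact (contDiffAt_lLs_joint hu hnc s₀).mul (ContDiffAt.comp (g := lf lam tau u) (f := Prod.snd) (s₀, x) (contDiffAt_lf hu hnc) contDiffAt_snd)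
  · exact (mul_pos (lLs_pos hnc s₀) (lf_pos hnc)).ne'

lemma contDiffAt_Bf_joint (hu : ContDiff ℝ (⊤:ℕ∞) u) (hnc : lf lam tau u x ≠ 0) (s₀ : ℝ) :
    ContDiffAt ℝ (⊤:ℕ∞) (fun p : ℝ × Pt => Bf lam tau u p.1 p.2) (s₀, x) := by
  apply ContDiffAt.div
  · exact (((contDiff_X3u hu).comp contDiff_snd).mul
      ((contDiff_qf hu).comp contDiff_snd)).contDiffAt
  · exact (contDiffAt_lLs_joint hu hnc s₀).mul (ContDiffAt.comp (g := lf lam tau u) (f := Prod.snd) (s₀, x) (contDiffAt_lf hu hnc) contDiffAt_snd)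
  · exact (mul_pos (lLs_pos hnc s₀) (lf_pos hnc)).ne'

lemma contDiffAt_Cf_joint (hu : ContDiff ℝ (⊤:ℕ∞) u) (hnc : lf lam tau u x ≠ 0) (s₀ : ℝ) :
    ContDiffAt ℝ (⊤:ℕ∞) (fun p : ℝ × Pt => Cf lam tau u p.1 p.2) (s₀, x) := by
  apply ContDiffAt.neg
  apply ContDiffAt.div
  · exact ContDiffAt.comp (g := lf lam tau u) (f := Prod.snd) (s₀, x) (contDiffAt_lf hu hnc) contDiffAt_snd
  · exact contDiffAt_lLs_joint hu hnc s₀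
  · exact (lLs_pos hnc s₀).ne'

lemma contDiffAt_Ef_joint (hu : ContDiff ℝ (⊤:ℕ∞) u) (hnc : lf lam tau u x ≠ 0) (s₀ : ℝ) :
    ContDiffAt ℝ (⊤:ℕ∞) (fun p : ℝ × Pt => Ef lam tau u p.1 p.2) (s₀, x) := by
  apply ContDiffAt.add
  apply ContDiffAt.add
  · exact (contDiffAt_Af_joint hu hnc s₀).smul ((contDiff_X1.comp contDiff_snd).contDiffAt)
  · exact (contDiffAt_Bf_joint hu hnc s₀).smul ((contDiff_X2.comp contDiff_snd).contDiffAt)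
  · exact (contDiffAt_Cf_joint hu hnc s₀).smul contDiffAt_const

lemma contDiffAt_Gf_joint (hu : ContDiff ℝ (⊤:ℕ∞) u) (hh : ContDiff ℝ 2 h)
    (hnc : lf lam tau u x ≠ 0) (s₀ : ℝ) :
    ContDiffAt ℝ 1 (fun p : ℝ × Pt => Gf lam tau u h p.1 p.2) (s₀, x) := by
  unfold Gf
  exact (((hh.fderiv_right (by norm_num)).comp contDiff_snd).contDiffAt).clm_apply
    ((contDiffAt_Ef_joint hu hnc s₀).of_le (by simp))

end Aux4
section Aux5

variable {lam tau : ℝ} {u h : Pt → ℝ} {x : Pt}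

variable {G' : Type*} [NormedAddCommGroup G'] [NormedSpace ℝ G']

lemma slice_contDiffAt {n : WithTop ℕ∞} {f : ℝ → Pt → G'} {s : ℝ}
    (hf : ContDiffAt ℝ n (fun p : ℝ × Pt => f p.1 p.2) (s, x)) :
    ContDiffAt ℝ n (f s) x :=
  ContDiffAt.comp (f := fun y : Pt => (s, y)) x hf (ContDiffAt.prodMk contDiffAt_const contDiffAt_id)

lemma param_contAt {n : WithTop ℕ∞} {f : ℝ → Pt → G'} {s : ℝ}
    (hf : ContDiffAt ℝ n (fun p : ℝ × Pt => f p.1 p.2) (s, x)) :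
    ContinuousAt (fun t => f t x) s :=
  (ContDiffAt.comp (f := fun t : ℝ => (t, x)) s hf (ContDiffAt.prodMk contDiffAt_id contDiffAt_const)).continuousAt

lemma param_fderiv_contAt {f : ℝ → Pt → ℝ} {s : ℝ}
    (hf : ContDiffAt ℝ 1 (fun p : ℝ × Pt => f p.1 p.2) (s, x)) :
    ContinuousAt (fun t => fderiv ℝ (f t) x) s := by
  have := ContDiffAt.fderiv (f := f) (g := fun _ => x) (m := 0) hf contDiffAt_const
    (by norm_num)
  exact this.continuousAt

def dAx (lam tau : ℝ) (u : Pt → ℝ) (x : Pt) (s : ℝ) : Pt →L[ℝ] ℝ :=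
  fderiv ℝ (Af lam tau u s) x

def dBx (lam tau : ℝ) (u : Pt → ℝ) (x : Pt) (s : ℝ) : Pt →L[ℝ] ℝ :=
  fderiv ℝ (Bf lam tau u s) x

def dCx (lam tau : ℝ) (u : Pt → ℝ) (x : Pt) (s : ℝ) : Pt →L[ℝ] ℝ :=
  fderiv ℝ (Cf lam tau u s) x

def dGx (lam tau : ℝ) (u h : Pt → ℝ) (x : Pt) (s : ℝ) : Pt →L[ℝ] ℝ :=
  fderiv ℝ (Gf lam tau u h s) x

def V0v (lam tau : ℝ) (u : Pt → ℝ) (x : Pt) : Pt :=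
  nabla lam tau 1 (e1 lam tau u) (e1 lam tau u) x

def Wv (lam tau : ℝ) (u : Pt → ℝ) (x : Pt) (s : ℝ) : Pt :=
  (s * Af lam tau u s x) •
      ((s * dAx lam tau u x s (X1 lam tau x)) • X1 lam tau x
        + (s * Af lam tau u s x) • nablaF lam tau 1 0 0 x)
    + ((s * Af lam tau u s x) •
      ((s * dBx lam tau u x s (X1 lam tau x)) • X2 lam tau x
        + (s * Bf lam tau u s x) • nablaF lam tau 1 0 1 x)
    + ((s * Af lam tau u s x) • ((s * dCx lam tau u x s (X1 lam tau x)) • X3 x)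
        + (-tau * (Af lam tau u s x * Cf lam tau u s x)) • X2 lam tau x)
    + ((s * Bf lam tau u s x) •
      ((s * dAx lam tau u x s (X2 lam tau x)) • X1 lam tau x
        + (s * Af lam tau u s x) • nablaF lam tau 1 1 0 x)
    + ((s * Bf lam tau u s x) •
      ((s * dBx lam tau u x s (X2 lam tau x)) • X2 lam tau x
        + (s * Bf lam tau u s x) • nablaF lam tau 1 1 1 x)
    + ((s * Bf lam tau u s x) • ((s * dCx lam tau u x s (X2 lam tau x)) • X3 x)
        + (tau * (Bf lam tau u s x * Cf lam tau u s x)) • X1 lam tau x)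
    + ((s * Cf lam tau u s x) • ((s * dAx lam tau u x s (X3 x)) • X1 lam tau x)
        + (-tau * (Cf lam tau u s x * Af lam tau u s x)) • X2 lam tau x
    + ((s * Cf lam tau u s x) • ((s * dBx lam tau u x s (X3 x)) • X2 lam tau x)
        + (tau * (Cf lam tau u s x * Bf lam tau u s x)) • X1 lam tau x
    + (s * Cf lam tau u s x) •
        ((s * dCx lam tau u x s (X3 x)) • X3 x + (s * Cf lam tau u s x) • (0 : Pt)))))))

def Ffun (lam tau : ℝ) (u h : Pt → ℝ) (x : Pt) (s : ℝ) : ℝ :=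
  -dd (e1 lam tau u) (dd (e1 lam tau u) h) x
    - s ^ 2 * dGx lam tau u h x s (Ef lam tau u s x)
    + (s ^ 2 * (omf lam tau 0 x (V0v lam tau u x) * Af lam tau u s x
        + omf lam tau 1 x (V0v lam tau u x) * Bf lam tau u s x)) * Gf lam tau u h s x
    + (omf lam tau 0 x (Wv lam tau u x s) * omf lam tau 0 x (e1 lam tau u x)
        + omf lam tau 1 x (Wv lam tau u x s) * omf lam tau 1 x (e1 lam tau u x))
      * dd (e1 lam tau u) h x

end Aux5
section Aux6

variable {lam tau : ℝ} {u h : Pt → ℝ} {x : Pt}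

lemma mu_ev (hx : 0 < mu lam x) : ∀ᶠ y in nhds x, mu lam y ≠ 0 :=
  ((contDiff_mu (lam := lam)).continuous.continuousAt).eventually_ne hx.ne'

lemma omf2_e1_fderiv (hx : 0 < mu lam x) :
    fderiv ℝ (fun y => omf lam tau 2 y (e1 lam tau u y)) x = 0 := by
  have hev : (fun y => omf lam tau 2 y (e1 lam tau u y)) =ᶠ[nhds x] (fun _ => 0) :=
    (mu_ev hx).mono fun y hy => by simp [omf_e1 2 hy]
  rw [hev.fderiv_eq]; exact fderiv_const_apply 0

lemma nabla_e1_indep (hx : 0 < mu lam x) (L : ℝ) :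
    nabla lam tau L (e1 lam tau u) (e1 lam tau u) x = V0v lam tau u x := by
  have h2 : omf lam tau 2 x (e1 lam tau u x) = 0 := by rw [omf_e1 2 hx.ne']; simp
  simp only [V0v, nabla, Fin.sum_univ_three, h2, zero_smul, smul_zero, add_zero, zero_add,
    nablaF, Matrix.cons_val_zero, Matrix.cons_val_one, Matrix.head_cons, Matrix.cons_val_two,
    Matrix.tail_cons]

lemma omf2_V0 (hx : 0 < mu lam x) : omf lam tau 2 x (V0v lam tau u x) = 0 := by
  have h2 : omf lam tau 2 x (e1 lam tau u x) = 0 := by rw [omf_e1 2 hx.ne']; simp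
  have hdd2 : ∀ i : Fin 3, dd (Xf lam tau i) (fun y => omf lam tau 2 y (e1 lam tau u y)) x
      = 0 := by
    intro i; unfold dd; rw [omf2_e1_fderiv hx]; rfl
  simp only [V0v, nabla, Fin.sum_univ_three, h2, zero_smul, smul_zero, add_zero, zero_add,
    hdd2, omf_add, omf_sub, omf_neg, omf_smul]
  simp only [Xf, nablaF, Matrix.cons_val_zero, Matrix.cons_val_one, Matrix.head_cons,
    Matrix.cons_val_two, Matrix.tail_cons, omf_add, omf_sub, omf_neg, omf_smul,
    omf_X1 2 hx.ne', omf_X2 2 hx.ne', omf_X3]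
  simp
  ring

end Aux6
section Aux7

variable {lam tau : ℝ} {u h : Pt → ℝ} {x : Pt}

lemma expr_eq (hu : ContDiff ℝ (⊤:ℕ∞) u) (hh : ContDiff ℝ 2 h)
    (hx : 0 < mu lam x) (hnc : lf lam tau u x ≠ 0) {L : ℝ} (hL : 0 < L) :
    -dd (e1 lam tau u) (dd (e1 lam tau u) h) x
      - dd (e2 lam tau L u) (dd (e2 lam tau L u) h) x
      + gL lam tau L x (nabla lam tau L (e1 lam tau u) (e1 lam tau u) x)
          (e2 lam tau L u x) * dd (e2 lam tau L u) h x
      + gL lam tau L x (nabla lam tau L (e2 lam tau L u) (e2 lam tau L u) x)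
          (e1 lam tau u x) * dd (e1 lam tau u) h x
    = Ffun lam tau u h x (Real.sqrt L)⁻¹ := by
  set s : ℝ := (Real.sqrt L)⁻¹ with hs_def
  have hsL : s ^ 2 * L = 1 := by
    rw [hs_def, inv_pow, Real.sq_sqrt hL.le]
    exact inv_mul_cancel₀ hL.ne'
  have hmux : mu lam x ≠ 0 := hx.ne'
  have he2 : e2 lam tau L u = fun y => s • Ef lam tau u s y := e2_eq lam tau u L
  have hAdiff : DifferentiableAt ℝ (Af lam tau u s) x :=
    (slice_contDiffAt (contDiffAt_Af_joint hu hnc s)).differentiableAt (by simp)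
  have hBdiff : DifferentiableAt ℝ (Bf lam tau u s) x :=
    (slice_contDiffAt (contDiffAt_Bf_joint hu hnc s)).differentiableAt (by simp)
  have hCdiff : DifferentiableAt ℝ (Cf lam tau u s) x :=
    (slice_contDiffAt (contDiffAt_Cf_joint hu hnc s)).differentiableAt (by simp)
  have hGdiff : DifferentiableAt ℝ (Gf lam tau u h s) x :=
    (slice_contDiffAt (contDiffAt_Gf_joint hu hh hnc s)).differentiableAt (by simp)
  -- inner derivative of h along e2
  have hdd_e2h : dd (e2 lam tau L u) h = fun y => s * Gf lam tau u h s y := by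
    funext y
    simp only [dd, he2, Gf, map_smul, smul_eq_mul]
  -- Term 2
  have hT2 : dd (e2 lam tau L u) (dd (e2 lam tau L u) h) x
      = s ^ 2 * dGx lam tau u h x s (Ef lam tau u s x) := by
    rw [hdd_e2h]
    simp only [dd, he2]
    rw [fderiv_const_mul hGdiff s]
    simp only [ContinuousLinearMap.smul_apply, map_smul, smul_eq_mul, dGx]
    ring
  -- omf of e2 at x
  have homf0 : omf lam tau 0 x (e2 lam tau L u x) = s * Af lam tau u s x := by
    rw [he2]; rw [omf_smul, omf_Ef 0 hmux]; simp
  have homf1 : omf lam tau 1 x (e2 lam tau L u x) = s * Bf lam tau u s x := by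
    rw [he2]; rw [omf_smul, omf_Ef 1 hmux]; simp
  have homf2 : omf lam tau 2 x (e2 lam tau L u x) = s * Cf lam tau u s x := by
    rw [he2]; rw [omf_smul, omf_Ef 2 hmux]; simp
  -- Term 3
  have hT3 : gL lam tau L x (nabla lam tau L (e1 lam tau u) (e1 lam tau u) x)
        (e2 lam tau L u x) * dd (e2 lam tau L u) h x
      = (s ^ 2 * (omf lam tau 0 x (V0v lam tau u x) * Af lam tau u s x
          + omf lam tau 1 x (V0v lam tau u x) * Bf lam tau u s x)) * Gf lam tau u h s x := by
    rw [nabla_e1_indep hx, hdd_e2h]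
    simp only [gL, homf0, homf1, homf2, omf2_V0 hx]
    ring
  -- fderiv rewrites for omf ∘ e2
  have hevA : (fun y => omf lam tau 0 y (e2 lam tau L u y))
      =ᶠ[nhds x] (fun y => s * Af lam tau u s y) :=
    (mu_ev hx).mono fun y hy => by rw [he2]; simp only; rw [omf_smul, omf_Ef 0 hy]; simp
  have hevB : (fun y => omf lam tau 1 y (e2 lam tau L u y))
      =ᶠ[nhds x] (fun y => s * Bf lam tau u s y) :=
    (mu_ev hx).mono fun y hy => by rw [he2]; simp only; rw [omf_smul, omf_Ef 1 hy]; simp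
  have hevC : (fun y => omf lam tau 2 y (e2 lam tau L u y))
      =ᶠ[nhds x] (fun y => s * Cf lam tau u s y) :=
    (mu_ev hx).mono fun y hy => by rw [he2]; simp only; rw [omf_smul, omf_Ef 2 hy]; simp
  have hddA : ∀ v : Pt, fderiv ℝ (fun y => omf lam tau 0 y (e2 lam tau L u y)) x v
      = s * dAx lam tau u x s v := by
    intro v; rw [hevA.fderiv_eq, fderiv_const_mul hAdiff s]; simp [dAx]
  have hddB : ∀ v : Pt, fderiv ℝ (fun y => omf lam tau 1 y (e2 lam tau L u y)) x v
      = s * dBx lam tau u x s v := by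
    intro v; rw [hevB.fderiv_eq, fderiv_const_mul hBdiff s]; simp [dBx]
  have hddC : ∀ v : Pt, fderiv ℝ (fun y => omf lam tau 2 y (e2 lam tau L u y)) x v
      = s * dCx lam tau u x s v := by
    intro v; rw [hevC.fderiv_eq, fderiv_const_mul hCdiff s]; simp [dCx]
  -- Term 4 vector
  have key_neg : ∀ (a b : ℝ) (v : Pt),
      (s * a) • ((s * b) • ((-(tau * L)) • v)) = (-tau * (a * b)) • v := by
    intro a b v
    rw [smul_smul, smul_smul]
    congr 1
    linear_combination (-(tau * a * b)) * hsL
  have key_pos : ∀ (a b : ℝ) (v : Pt),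
      (s * a) • ((s * b) • ((tau * L) • v)) = (tau * (a * b)) • v := by
    intro a b v
    rw [smul_smul, smul_smul]
    congr 1
    linear_combination (tau * a * b) * hsL
  have hT4v : nabla lam tau L (e2 lam tau L u) (e2 lam tau L u) x = Wv lam tau u x s := by
    simp only [nabla, Fin.sum_univ_three, dd, Xf, Matrix.cons_val_zero, Matrix.cons_val_one,
      Matrix.head_cons, Matrix.cons_val_two, Matrix.tail_cons]
    simp only [homf0, homf1, homf2, hddA, hddB, hddC]
    simp only [Wv, nablaF, Matrix.cons_val_zero, Matrix.cons_val_one, Matrix.head_cons,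
      Matrix.cons_val_two, Matrix.tail_cons, smul_add]
    rw [key_neg, key_pos, key_neg, key_pos]
    module
  have h2e1 : omf lam tau 2 x (e1 lam tau u x) = 0 := by rw [omf_e1 2 hmux]; simp
  have hT4 : gL lam tau L x (nabla lam tau L (e2 lam tau L u) (e2 lam tau L u) x)
        (e1 lam tau u x)
      = omf lam tau 0 x (Wv lam tau u x s) * omf lam tau 0 x (e1 lam tau u x)
        + omf lam tau 1 x (Wv lam tau u x s) * omf lam tau 1 x (e1 lam tau u x) := by
    rw [hT4v]
    simp only [gL, h2e1]
    ring_nf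
  rw [hT2, hT3, hT4, Ffun]
end Aux7
section Aux8

variable {lam tau : ℝ} {u h : Pt → ℝ} {x : Pt}

lemma contAt_clm_apply {α : Type*} [TopologicalSpace α] {f : α → (Pt →L[ℝ] ℝ)} {g : α → Pt}
    {a : α} (hf : ContinuousAt f a) (hg : ContinuousAt g a) :
    ContinuousAt (fun t => f t (g t)) a :=
  (isBoundedBilinearMap_apply.continuous.continuousAt).comp (f := fun t => (f t, g t)) (hf.prodMk hg)

lemma cont_omf0 : Continuous (fun v : Pt => omf lam tau 0 x v) := by
  simp only [omf, Matrix.cons_val_zero]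
  exact (continuous_apply 0).div_const _

lemma cont_omf1 : Continuous (fun v : Pt => omf lam tau 1 x v) := by
  simp only [omf, Matrix.cons_val_one, Matrix.head_cons]
  exact (continuous_apply 1).div_const _

set_option maxHeartbeats 1600000 in
lemma Ffun_contAt (hu : ContDiff ℝ (⊤:ℕ∞) u) (hh : ContDiff ℝ 2 h)
    (hnc : lf lam tau u x ≠ 0) :
    ContinuousAt (Ffun lam tau u h x) 0 := by
  have hA : ContinuousAt (fun s => Af lam tau u s x) 0 :=
    param_contAt (contDiffAt_Af_joint hu hnc 0)
  have hB : ContinuousAt (fun s => Bf lam tau u s x) 0 :=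
    param_contAt (contDiffAt_Bf_joint hu hnc 0)
  have hC : ContinuousAt (fun s => Cf lam tau u s x) 0 :=
    param_contAt (contDiffAt_Cf_joint hu hnc 0)
  have hEf : ContinuousAt (fun s => Ef lam tau u s x) 0 :=
    param_contAt (contDiffAt_Ef_joint hu hnc 0)
  have hGf : ContinuousAt (fun s => Gf lam tau u h s x) 0 :=
    param_contAt (contDiffAt_Gf_joint hu hh hnc 0)
  have hdA : ContinuousAt (dAx lam tau u x) 0 :=
    param_fderiv_contAt ((contDiffAt_Af_joint hu hnc 0).of_le (by simp))
  have hdB : ContinuousAt (dBx lam tau u x) 0 :=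
    param_fderiv_contAt ((contDiffAt_Bf_joint hu hnc 0).of_le (by simp))
  have hdC : ContinuousAt (dCx lam tau u x) 0 :=
    param_fderiv_contAt ((contDiffAt_Cf_joint hu hnc 0).of_le (by simp))
  have hdG : ContinuousAt (dGx lam tau u h x) 0 :=
    param_fderiv_contAt (contDiffAt_Gf_joint hu hh hnc 0)
  have hdGapp : ContinuousAt (fun s => dGx lam tau u h x s (Ef lam tau u s x)) 0 :=
    contAt_clm_apply hdG hEf
  have hdA1 : ContinuousAt (fun s => dAx lam tau u x s (X1 lam tau x)) 0 :=
    contAt_clm_apply hdA continuousAt_const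
  have hdA2 : ContinuousAt (fun s => dAx lam tau u x s (X2 lam tau x)) 0 :=
    contAt_clm_apply hdA continuousAt_const
  have hdA3 : ContinuousAt (fun s => dAx lam tau u x s (X3 x)) 0 :=
    contAt_clm_apply hdA continuousAt_const
  have hdB1 : ContinuousAt (fun s => dBx lam tau u x s (X1 lam tau x)) 0 :=
    contAt_clm_apply hdB continuousAt_const
  have hdB2 : ContinuousAt (fun s => dBx lam tau u x s (X2 lam tau x)) 0 :=
    contAt_clm_apply hdB continuousAt_const
  have hdB3 : ContinuousAt (fun s => dBx lam tau u x s (X3 x)) 0 :=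
    contAt_clm_apply hdB continuousAt_const
  have hdC1 : ContinuousAt (fun s => dCx lam tau u x s (X1 lam tau x)) 0 :=
    contAt_clm_apply hdC continuousAt_const
  have hdC2 : ContinuousAt (fun s => dCx lam tau u x s (X2 lam tau x)) 0 :=
    contAt_clm_apply hdC continuousAt_const
  have hdC3 : ContinuousAt (fun s => dCx lam tau u x s (X3 x)) 0 :=
    contAt_clm_apply hdC continuousAt_const
  have hid : ContinuousAt (fun s : ℝ => s) 0 := continuousAt_id
  have hW : ContinuousAt (Wv lam tau u x) 0 := by
    unfold Wv
    repeat'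
      first
        | exact hid
        | exact hA
        | exact hB
        | exact hC
        | exact hdA1
        | exact hdA2
        | exact hdA3
        | exact hdB1
        | exact hdB2
        | exact hdB3
        | exact hdC1
        | exact hdC2
        | exact hdC3
        | exact continuousAt_const
        | apply ContinuousAt.add
        | apply ContinuousAt.fun_smul
        | apply ContinuousAt.mul
  unfold Ffun
  apply ContinuousAt.add
  apply ContinuousAt.add
  · exact (continuousAt_const.sub ((hid.pow 2).mul hdGapp))
  · exact ((hid.pow 2).mul ((continuousAt_const.mul hA).add
      (continuousAt_const.mul hB))).mul hGf
  · exact (((cont_omf0.continuousAt.comp hW).mul continuousAt_const).add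
      ((cont_omf1.continuousAt.comp hW).mul continuousAt_const)).mul continuousAt_const

end Aux8
section Aux9

variable {lam tau : ℝ} {u h : Pt → ℝ} {x : Pt}

lemma Ffun_zero (hx : 0 < mu lam x) (hnc : lf lam tau u x ≠ 0) :
    Ffun lam tau u h x 0
      = -dd (e1 lam tau u) (dd (e1 lam tau u) h) x
        - 2 * tau * X3u u x / lf lam tau u x * dd (e1 lam tau u) h x := by
  have hmux : mu lam x ≠ 0 := hx.ne'
  have hl2 : lf lam tau u x ^ 2 = pf lam tau u x ^ 2 + qf lam tau u x ^ 2 :=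
    Real.sq_sqrt (by positivity)
  have hlLs0 : lLs lam tau u 0 x = lf lam tau u x := by simp [lLs, lf]
  simp only [Ffun, Wv, zero_mul, zero_smul, smul_zero, zero_add, add_zero, ne_eq,
    OfNat.ofNat_ne_zero, not_false_eq_true, zero_pow, omf_add, omf_smul,
    omf_X1 0 hmux, omf_X2 0 hmux, omf_X3, omf_X1 1 hmux, omf_X2 1 hmux,
    omf_e1 0 hmux, omf_e1 1 hmux, Af, Bf, Cf, hlLs0, qbar, pbar,
    Matrix.cons_val_zero, Matrix.cons_val_one, Matrix.head_cons]
  field_simp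
  ring_nf
  linear_combination (2 * tau * X3u u x * dd (e1 lam tau u) h x) * hl2

end Aux9

/-- the sub-Riemannian limit of the fiber Laplacian
`Δ_F h = −ē₁(ē₁(h)) − ē₂(ē₂(h)) + g_L(∇^L_{ē₁}ē₁, ē₂)·ē₂(h) + g_L(∇^L_{ē₂}ē₂, ē₁)·ē₁(h)`
is `−ē₁(ē₁(h)) − (2τX₃u/l)·ē₁(h)`. -/
theorem statement12 (lam tau : ℝ) (htau : 0 < tau)
    (u : Pt → ℝ) (hu : ContDiff ℝ (⊤ : ℕ∞) u)
    (h : Pt → ℝ) (hh : ContDiff ℝ 2 h)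
    (x : Pt) (hx : 0 < mu lam x) (hnc : lf lam tau u x ≠ 0) :
    Filter.Tendsto (fun L : ℝ =>
        -dd (e1 lam tau u) (dd (e1 lam tau u) h) x
          - dd (e2 lam tau L u) (dd (e2 lam tau L u) h) x
          + gL lam tau L x (nabla lam tau L (e1 lam tau u) (e1 lam tau u) x)
              (e2 lam tau L u x) * dd (e2 lam tau L u) h x
          + gL lam tau L x (nabla lam tau L (e2 lam tau L u) (e2 lam tau L u) x)
              (e1 lam tau u x) * dd (e1 lam tau u) h x)
      Filter.atTop
      (nhds (-dd (e1 lam tau u) (dd (e1 lam tau u) h) x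
        - 2 * tau * X3u u x / lf lam tau u x * dd (e1 lam tau u) h x)) := by
  have hsqrt : Filter.Tendsto (fun L : ℝ => (Real.sqrt L)⁻¹) Filter.atTop (nhds 0) := by
    apply Filter.Tendsto.inv_tendsto_atTop
    apply Filter.tendsto_atTop_atTop.2
    intro b
    refine ⟨b ^ 2 + 1, fun a ha => ?_⟩
    nlinarith [Real.sq_sqrt (by nlinarith [sq_nonneg b] : (0:ℝ) ≤ a), Real.sqrt_nonneg a]
  have htend : Filter.Tendsto (fun L : ℝ => Ffun lam tau u h x (Real.sqrt L)⁻¹)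
      Filter.atTop (nhds (Ffun lam tau u h x 0)) :=
    Filter.Tendsto.comp (Ffun_contAt hu hh hnc) hsqrt
  rw [Ffun_zero hx hnc] at htend
  exact htend.congr'
    ((Filter.eventually_gt_atTop 0).mono fun L hL => (expr_eq hu hh hx hnc hL).symm)
end
end
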